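/- Let G be a neat, globally associative local group, ι : G → H its embedding into the Mal'cev globalization. Then for any local group morphism φ : G → L into a topological group L, there is a unique continuous group homomorphism φ̃ : H → L with φ̃ ∘ ι = φ. -/

import Mathlib

/-- A neat local group: inversion is everywhere defined, products with the
identity and with inverses are defined, partial associativity holds, and
`(xy, y⁻¹) ∈ Ω` whenever `(x, y) ∈ Ω`. -/
class NeatLocalGroup (G : Type*) where
  one : G
  mul : G → G → G
  inv : G → G
  defined : G → G → Prop
  defined_one_left : ∀ x : G, defined one x
  defined_one_right : ∀ x : G, defined x one
  one_mul : ∀ x : G, mul one x = x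
  mul_one : ∀ x : G, mul x one = x
  defined_inv_left : ∀ x : G, defined (inv x) x
  defined_inv_right : ∀ x : G, defined x (inv x)
  inv_mul_cancel : ∀ x : G, mul (inv x) x = one
  mul_inv_cancel : ∀ x : G, mul x (inv x) = one
  mul_assoc : ∀ x y z : G, defined x y → defined y z → defined (mul x y) z →
      defined x (mul y z) → mul (mul x y) z = mul x (mul y z)
  neat : ∀ x y : G, defined x y → defined (mul x y) (inv y)

namespace NeatLocalGroup

variable {G : Type*} [NeatLocalGroup G]

/-- One contraction step on words over `G`: either merge an adjacent pair
whose product is defined (type I), or delete an adjacent pair `(a, a⁻¹)`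
(type II).  `Step x y` means `y` is a contraction of `x`; equivalently, `x`
is an expansion of `y`. -/
inductive Step : List G → List G → Prop
  | contr1 (u v : List G) (a b : G) (h : defined a b) :
      Step (u ++ a :: b :: v) (u ++ mul a b :: v)
  | contr2 (u v : List G) (a : G) :
      Step (u ++ a :: inv a :: v) (u ++ v)

/-- Two words are equivalent iff they are connected by a finite chain of
contractions and expansions. -/
instance wordSetoid : Setoid (List G) :=
  ⟨Relation.EqvGen Step, Relation.EqvGen.is_equivalence _⟩

/-- The set of equivalence classes of words over `G`. -/
abbrev WordQuot (G : Type*) [NeatLocalGroup G] : Type _ :=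
  Quotient (wordSetoid (G := G))

/-- `(a₁,…,aₙ) ⇝ b`: some parenthesization of the word has all intermediate
products defined and evaluates to `b`. -/
inductive Eval : List G → G → Prop
  | nil : Eval [] (one : G)
  | single (a : G) : Eval [a] a
  | app {l₁ l₂ : List G} {b c : G} : l₁ ≠ [] → l₂ ≠ [] →
      Eval l₁ b → Eval l₂ c → defined b c → Eval (l₁ ++ l₂) (mul b c)

/-- `G` is globally associative if any two parenthesized evaluations of the
same word agree. -/
def GloballyAssociative (G : Type*) [NeatLocalGroup G] : Prop :=
  ∀ (l : List G) (b c : G), Eval l b → Eval l c → b = c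

end NeatLocalGroup

open NeatLocalGroup in
/-- (Universal property of the Mal'cev globalization) Let `G` be a neat,
globally associative topological local group and let `H = WordQuot G` be its
globalization: a topological group structure whose multiplication is induced
by concatenation and in which the images under `ι : g ↦ [(g)]` of the open
neighborhoods of `1` in `G` form a neighborhood base at the identity.  Then
every continuous local group morphism `φ : G → L` into a topological group
`L` extends uniquely to a continuous group homomorphism `φ̃ : H → L` with
`φ̃ ∘ ι = φ`. -/
theorem malcev_universal_property
    {G L : Type*} [NeatLocalGroup G] [TopologicalSpace G]
    [Group (WordQuot G)] [TopologicalSpace (WordQuot G)]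
    [IsTopologicalGroup (WordQuot G)]
    (hGA : GloballyAssociative G)
    (hmulQ : ∀ x y : List G, (⟦x⟧ * ⟦y⟧ : WordQuot G) = ⟦x ++ y⟧)
    (honeQ : (1 : WordQuot G) = (⟦([] : List G)⟧ : WordQuot G))
    (hbasis : (nhds (1 : WordQuot G)).HasBasis
      (fun U : Set G => IsOpen U ∧ (one : G) ∈ U)
      (fun U : Set G => (fun g : G => (⟦[g]⟧ : WordQuot G)) '' U))
    [Group L] [TopologicalSpace L] [IsTopologicalGroup L]
    (φ : G → L) (hφc : Continuous φ) (hφ1 : φ (one : G) = 1)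
    (hφmul : ∀ a b : G, defined a b → φ (mul a b) = φ a * φ b) :
    ∃! F : WordQuot G →* L,
      Continuous F ∧ ∀ g : G, F (⟦[g]⟧ : WordQuot G) = φ g := by
  classical
  have hinv : ∀ a : G, φ (NeatLocalGroup.inv a) = (φ a)⁻¹ := by
    intro a
    have h := hφmul a (NeatLocalGroup.inv a) (NeatLocalGroup.defined_inv_right a)
    rw [NeatLocalGroup.mul_inv_cancel, hφ1] at h
    exact (inv_eq_of_mul_eq_one_right h.symm).symm
  set f : List G → L := fun l => (l.map φ).prod with hf
  have hstep : ∀ x y : List G, NeatLocalGroup.Step x y → f x = f y := by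
    intro x y h
    induction h with
    | contr1 u v a b h => simp [hf, hφmul a b h, _root_.mul_assoc]
    | contr2 u v a => simp [hf, hinv]
  have hresp : ∀ x y : List G, x ≈ y → f x = f y := by
    intro x y h
    induction h with
    | rel _ _ h => exact hstep _ _ h
    | refl => rfl
    | symm _ _ _ ih => exact ih.symm
    | trans _ _ _ _ _ ih1 ih2 => exact ih1.trans ih2
  set F0 : WordQuot G → L := Quotient.lift f hresp with hF0def
  have hF0 : ∀ l : List G, F0 ⟦l⟧ = f l := fun l => rfl
  have hF0mul : ∀ x y : WordQuot G, F0 (x * y) = F0 x * F0 y := by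
    intro x y
    induction x using Quotient.ind with
    | _ x =>
    induction y using Quotient.ind with
    | _ y =>
    rw [hmulQ, hF0, hF0, hF0, hf]
    simp
  have h1 : F0 (1 : WordQuot G) = 1 := by rw [honeQ]; exact (hF0 []).trans rfl
  refine ⟨{ toFun := F0,
            map_one' := by rw [honeQ]; exact hF0 [],
            map_mul' := hF0mul }, ⟨?_, ?_⟩, ?_⟩
  · -- continuity
    apply continuous_of_continuousAt_one
    show ContinuousAt F0 1
    unfold ContinuousAt
    rw [h1, Filter.tendsto_def]
    intro V hV
    have hVnh : φ ⁻¹' V ∈ nhds (NeatLocalGroup.one : G) := by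
      have := hφc.continuousAt (x := (NeatLocalGroup.one : G))
      exact this (by rwa [hφ1])
    obtain ⟨U, hUsub, hUopen, hUone⟩ := mem_nhds_iff.1 hVnh
    rw [hbasis.mem_iff]
    refine ⟨U, ⟨hUopen, hUone⟩, ?_⟩
    rintro _ ⟨g, hg, rfl⟩
    show F0 ⟦[g]⟧ ∈ V
    have : F0 ⟦[g]⟧ = φ g := by rw [hF0]; simp [hf]
    rw [this]
    exact hUsub hg
  · intro g
    show F0 ⟦[g]⟧ = φ g
    rw [hF0]; simp [hf]
  · rintro F' ⟨-, hF'⟩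
    ext x
    induction x using Quotient.ind with
    | _ l =>
    show F' ⟦l⟧ = F0 ⟦l⟧
    induction l with
    | nil =>
      rw [← honeQ, map_one, h1]
    | cons a l ih =>
      have : (⟦a :: l⟧ : WordQuot G) = ⟦[a]⟧ * ⟦l⟧ := by rw [hmulQ]; rfl
      rw [this, map_mul, hF0mul, ih, hF' a]
      congr 1
      rw [hF0]; simp [hf]
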